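/- (Barron's lemma, consequence) For any prefix-code sequence γ (so that γ restricted to X^n has prefix-free image, hence Kraft's inequality Σ_{x∈X^n} 2^(−||γ(x)||) ≤ 1 holds) and any i.i.d. source with entropy H, almost surely liminf_n ||γ(X_1,...,X_n)||/n ≥ H. -/

import Mathlib

open MeasureTheory Filter ENNReal

lemma kraft_aux {β : Type*} [Fintype β] (c : β → List Bool)
    (hpf : ∀ x y, x ≠ y → ¬ c x <+: c y) :
    ∑ x : β, ((2:ℝ) ^ (c x).length)⁻¹ ≤ 1 := by
  classical
  set L := Finset.univ.sup (fun x : β => (c x).length) with hL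
  have hle : ∀ x, (c x).length ≤ L := fun x => Finset.le_sup (f := fun x : β => (c x).length) (Finset.mem_univ x)
  set φ : (Σ x : β, (Fin (L - (c x).length) → Bool)) → (Fin L → Bool) :=
    fun z i => if h : (i : ℕ) < (c z.1).length then (c z.1).get ⟨i, h⟩
      else z.2 ⟨(i : ℕ) - (c z.1).length, by
        have := i.isLt; omega⟩ with hφ
  have key : ∀ (x y : β) (f : Fin (L - (c x).length) → Bool)
      (g : Fin (L - (c y).length) → Bool), φ ⟨x,f⟩ = φ ⟨y,g⟩ →
      (c x).length ≤ (c y).length → x = y := by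
    intro x y f g hfg hlen
    by_contra hxy
    apply hpf x y hxy
    rw [List.prefix_iff_eq_take]
    apply List.ext_getElem
    · simp only [List.length_take]; omega
    · intro i h1 h2
      have hiL : i < L := lt_of_lt_of_le h1 (hle x)
      have h3 := congrFun hfg ⟨i, hiL⟩
      simp only [hφ, dif_pos (show (i:ℕ) < (c x).length from h1),
        dif_pos (show (i:ℕ) < (c y).length from lt_of_lt_of_le h1 hlen)] at h3
      simpa [List.getElem_take, List.get_eq_getElem] using h3
  have hinj : Function.Injective φ := by
    rintro ⟨x, f⟩ ⟨y, g⟩ h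
    have hxy : x = y := by
      rcases le_total (c x).length (c y).length with hl | hl
      · exact key x y f g h hl
      · exact (key y x g f h.symm hl).symm
    subst hxy
    have hfg : f = g := by
      funext i
      have hi : (c x).length + (i : ℕ) < L := by have := i.isLt; omega
      have h3 := congrFun h ⟨(c x).length + i, hi⟩
      have hnl : ¬ ((c x).length + (i:ℕ) < (c x).length) := by omega
      simp only [hφ, dif_neg hnl] at h3
      have hv : (c x).length + (i:ℕ) - (c x).length = (i:ℕ) := by omega
      convert h3 using 2 <;> exact (Fin.ext hv.symm)
    rw [hfg]
  have hcard := Fintype.card_le_of_injective φ hinj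
  simp only [Fintype.card_sigma, Fintype.card_fun, Fintype.card_bool,
    Fintype.card_fin] at hcard
  have h2 : ∀ x : β, ((2:ℝ) ^ (c x).length)⁻¹ = (2:ℝ) ^ (L - (c x).length) / 2 ^ L := by
    intro x
    have hpow : (2:ℝ) ^ (L - (c x).length) * 2 ^ (c x).length = 2 ^ L := by
      rw [← pow_add]; congr 1; have := hle x; omega
    rw [_root_.eq_div_iff (by positivity), ← hpow]
    field_simp
  calc ∑ x, ((2:ℝ)^(c x).length)⁻¹
      = (∑ x, (2:ℝ)^(L - (c x).length)) / 2^L := by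
        rw [Finset.sum_div]; exact Finset.sum_congr rfl (fun x _ => h2 x)
    _ ≤ 2^L / 2^L := by
        gcongr
        calc (∑ x, (2:ℝ)^(L - (c x).length))
            = ((∑ x, 2^(L - (c x).length) : ℕ) : ℝ) := by push_cast; ring
          _ ≤ ((2^L : ℕ) : ℝ) := by exact_mod_cast hcard
          _ = 2^L := by push_cast; ring
    _ = 1 := div_self (by positivity)

set_option maxHeartbeats 1000000 in
theorem liminf_prefix_code_length_ge_entropy_iid {α : Type*} [Fintype α]
    [MeasurableSpace α] [MeasurableSingletonClass α]
    {Ω : Type*} [MeasurableSpace Ω] (μ : Measure Ω) [IsProbabilityMeasure μ]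
    (X : ℕ → Ω → α) (hXmeas : ∀ i, Measurable (X i))
    (hindep : ProbabilityTheory.iIndepFun X μ)
    (p : α → ℝ) (hdist : ∀ i a, (μ (X i ⁻¹' {a})).toReal = p a)
    {H : ℝ} (hH : H = -∑ a, p a * Real.logb 2 (p a))
    (γ : ∀ n : ℕ, (Fin n → α) → List Bool) (hγ : ∀ n, Function.Injective (γ n))
    (hprefix : ∀ n, ∀ x y : Fin n → α, x ≠ y → ¬ (γ n x <+: γ n y)) :
    ∀ᵐ ω ∂μ, ENNReal.ofReal H ≤
      atTop.liminf (fun n : ℕ =>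
        ((γ n (fun i : Fin n => X i ω)).length : ℝ≥0∞) / (n : ℝ≥0∞)) := by
  classical
  set f : α → ℝ := fun a => -Real.logb 2 (p a) with hf
  set Y : ℕ → Ω → ℝ := fun i ω => f (X i ω) with hY
  have hfmeas : Measurable f := measurable_of_countable f
  have hp0 : ∀ a, 0 ≤ p a := fun a => (hdist 0 a) ▸ ENNReal.toReal_nonneg
  -- identical distribution
  have hmap : ∀ i, Measure.map (X i) μ = Measure.map (X 0) μ := by
    intro i
    rw [Measure.ext_iff_singleton]
    intro a
    rw [Measure.map_apply (hXmeas i) (measurableSet_singleton a),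
        Measure.map_apply (hXmeas 0) (measurableSet_singleton a)]
    have h1 := hdist i a; have h2 := hdist 0 a
    exact (ENNReal.toReal_eq_toReal_iff' (measure_ne_top μ _) (measure_ne_top μ _)).mp
      (by rw [h1, h2])
  have hident : ∀ i, ProbabilityTheory.IdentDistrib (Y i) (Y 0) μ μ := by
    intro i
    exact (ProbabilityTheory.IdentDistrib.mk (hXmeas i).aemeasurable
      (hXmeas 0).aemeasurable (hmap i)).comp hfmeas
  have hpair : Pairwise (Function.onFun (fun u v => ProbabilityTheory.IndepFun u v μ) Y) := by
    intro i j hij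
    exact (hindep.indepFun hij).comp hfmeas hfmeas
  have hint : Integrable (Y 0) μ := by
    have hbd : ∀ᵐ ω ∂μ, ‖Y 0 ω‖ ≤ ∑ a, |f a| := by
      filter_upwards with ω
      calc ‖Y 0 ω‖ = |f (X 0 ω)| := rfl
        _ ≤ ∑ a, |f a| := Finset.single_le_sum (f := fun a => |f a|)
            (fun a _ => abs_nonneg _) (Finset.mem_univ _)
    exact ⟨((hfmeas.comp (hXmeas 0)).aestronglyMeasurable),
      HasFiniteIntegral.of_bounded hbd⟩
  have hmean : ∫ ω, Y 0 ω ∂μ = H := by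
    have h1 : ∫ ω, Y 0 ω ∂μ = ∫ a, f a ∂(Measure.map (X 0) μ) :=
      (integral_map (hXmeas 0).aemeasurable hfmeas.aestronglyMeasurable).symm
    rw [h1, integral_fintype (f := f) .of_finite]
    rw [hH]
    rw [← Finset.sum_neg_distrib]
    refine Finset.sum_congr rfl (fun a _ => ?_)
    rw [measureReal_def, Measure.map_apply (hXmeas 0) (measurableSet_singleton a), hdist 0 a]
    simp [hf, mul_comm]
  have hslln : ∀ᵐ ω ∂μ, Tendsto
      (fun n : ℕ => (n:ℝ)⁻¹ • ∑ i ∈ Finset.range n, Y i ω) atTop (nhds H) := by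
    have := ProbabilityTheory.strong_law_ae Y hint hpair hident
    rw [hmean] at this
    exact this

  -- a.s. positivity of p (X i ω)
  have hpos : ∀ᵐ ω ∂μ, ∀ i, 0 < p (X i ω) := by
    rw [ae_all_iff]
    intro i
    rw [ae_iff]
    have hnull : μ (⋃ a ∈ {a : α | p a = 0}, X i ⁻¹' {a}) = 0 := by
      rw [measure_biUnion_null_iff (Set.to_countable _)]
      intro a ha
      have hta := hdist i a
      rw [ha] at hta
      rcases (ENNReal.toReal_eq_zero_iff _).mp hta with h | h
      · exact h
      · exact absurd h (measure_ne_top μ _)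
    refine measure_mono_null (fun ω hω => ?_) hnull
    simp only [Set.mem_setOf_eq, not_lt] at hω
    exact Set.mem_biUnion (le_antisymm hω (hp0 _)) rfl
  -- cylinder measure
  have hcyl : ∀ (n : ℕ) (x : Fin n → α),
      μ {ω | (fun i : Fin n => X i ω) = x} = ENNReal.ofReal (∏ i, p (x i)) := by
    intro n x
    set s : ℕ → Set α := fun i => if h : i < n then {x ⟨i, h⟩} else Set.univ with hs
    have hset : {ω | (fun i : Fin n => X i ω) = x} = ⋂ i ∈ Finset.range n, X i ⁻¹' s i := by
      ext ω
      simp only [Set.mem_setOf_eq, funext_iff, Set.mem_iInter, Set.mem_preimage,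
        Finset.mem_range]
      constructor
      · intro h i hi
        simp [hs, dif_pos hi, h ⟨i, hi⟩]
      · intro h i
        have := h i i.isLt
        simpa [hs, dif_pos i.isLt] using this
    rw [hset, (ProbabilityTheory.iIndepFun_iff_measure_inter_preimage_eq_mul.mp hindep)
      (Finset.range n) (by
        intro i _
        by_cases h : i < n
        · simp only [hs, dif_pos h]; exact measurableSet_singleton _
        · simp only [hs, dif_neg h]; exact MeasurableSet.univ)]
    rw [ENNReal.ofReal_prod_of_nonneg (fun i _ => hp0 _)]
    rw [← Fin.prod_univ_eq_prod_range (fun i => μ (X i ⁻¹' s i)) n]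
    refine Finset.prod_congr rfl (fun i _ => ?_)
    have hsi : s (i : ℕ) = {x i} := by
      simp only [hs, dif_pos i.isLt, Fin.eta]
    rw [hsi, ← ENNReal.ofReal_toReal (measure_ne_top μ (X (i:ℕ) ⁻¹' {x i})), hdist]
  -- per-n tail bound
  have hq2 : ∀ n : ℕ, 1 ≤ n → ∀ x : Fin n → α,
      ((γ n x).length : ℝ) + 2 * Real.logb 2 n ≤ -Real.logb 2 (∏ i, p (x i)) →
      (∏ i, p (x i)) ≤ ((2:ℝ) ^ (γ n x).length)⁻¹ * ((n:ℝ) ^ 2)⁻¹ := by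
    intro n hn x hx
    have hnpos : (0:ℝ) < n := by exact_mod_cast hn
    rcases eq_or_lt_of_le (Finset.prod_nonneg fun i _ => hp0 (x i)) with h0 | h0
    · rw [← h0]; positivity
    · set q := ∏ i, p (x i) with hq
      have hlogq : Real.logb 2 q ≤ -((γ n x).length : ℝ) - 2 * Real.logb 2 n := by linarith
      have hrw : q = (2:ℝ) ^ (Real.logb 2 q) := (Real.rpow_logb two_pos (by norm_num) h0).symm
      rw [hrw]
      have h2 : (2:ℝ) ^ (Real.logb 2 q) ≤ (2:ℝ) ^ (-((γ n x).length : ℝ) - 2 * Real.logb 2 n) :=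
        Real.rpow_le_rpow_of_exponent_le one_le_two hlogq
      refine h2.trans_eq ?_
      rw [Real.rpow_sub two_pos, Real.rpow_neg (by norm_num), Real.rpow_natCast]
      rw [div_eq_mul_inv]
      congr 1
      rw [show (2:ℝ) * Real.logb 2 n = Real.logb 2 n * 2 by ring,
        Real.rpow_mul (by norm_num), Real.rpow_logb two_pos (by norm_num) hnpos]
      rw [← Real.rpow_natCast (n:ℝ) 2]
      norm_num
  -- event measure bound
  have hA : ∀ n : ℕ, 1 ≤ n →
      μ {ω | ((γ n (fun i : Fin n => X i ω)).length : ℝ) + 2 * Real.logb 2 n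
        ≤ -Real.logb 2 (∏ i : Fin n, p (X (i:ℕ) ω))} ≤ ENNReal.ofReal (((n:ℝ)^2)⁻¹) := by
    intro n hn
    set S : Finset (Fin n → α) := Finset.univ.filter (fun x =>
      ((γ n x).length : ℝ) + 2 * Real.logb 2 n ≤ -Real.logb 2 (∏ i, p (x i))) with hS
    have hsub : {ω | ((γ n (fun i : Fin n => X i ω)).length : ℝ) + 2 * Real.logb 2 n
        ≤ -Real.logb 2 (∏ i : Fin n, p (X (i:ℕ) ω))}
        ⊆ ⋃ x ∈ S, {ω | (fun i : Fin n => X i ω) = x} := by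
      intro ω hω
      simp only [Set.mem_iUnion]
      exact ⟨fun i : Fin n => X i ω, by simpa [hS] using hω, rfl⟩
    refine (measure_mono hsub).trans ((measure_biUnion_finset_le S _).trans ?_)
    calc ∑ x ∈ S, μ {ω | (fun i : Fin n => X i ω) = x}
        = ∑ x ∈ S, ENNReal.ofReal (∏ i, p (x i)) := Finset.sum_congr rfl (fun x _ => hcyl n x)
      _ = ENNReal.ofReal (∑ x ∈ S, ∏ i, p (x i)) :=
          (ENNReal.ofReal_sum_of_nonneg (fun x _ => Finset.prod_nonneg fun i _ => hp0 _)).symm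
      _ ≤ ENNReal.ofReal (((n:ℝ)^2)⁻¹) := by
          apply ENNReal.ofReal_le_ofReal
          calc ∑ x ∈ S, ∏ i, p (x i)
              ≤ ∑ x ∈ S, ((2:ℝ) ^ (γ n x).length)⁻¹ * ((n:ℝ) ^ 2)⁻¹ := by
                refine Finset.sum_le_sum (fun x hx => ?_)
                exact hq2 n hn x (by simpa [hS] using hx)
            _ = (∑ x ∈ S, ((2:ℝ) ^ (γ n x).length)⁻¹) * ((n:ℝ) ^ 2)⁻¹ := by
                rw [Finset.sum_mul]
            _ ≤ 1 * ((n:ℝ) ^ 2)⁻¹ := by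
                refine mul_le_mul_of_nonneg_right ?_ (by positivity)
                calc ∑ x ∈ S, ((2:ℝ) ^ (γ n x).length)⁻¹
                      ≤ ∑ x : Fin n → α, ((2:ℝ) ^ (γ n x).length)⁻¹ :=
                        Finset.sum_le_sum_of_subset_of_nonneg (Finset.subset_univ S)
                          (fun x _ _ => by positivity)
                    _ ≤ 1 := kraft_aux (γ n) (hprefix n)
            _ = ((n:ℝ) ^ 2)⁻¹ := one_mul _
  -- Borel-Cantelli
  have hBC : ∀ᵐ ω ∂μ, ∀ᶠ n in atTop,
      ¬ (((γ n (fun i : Fin n => X i ω)).length : ℝ) + 2 * Real.logb 2 n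
        ≤ -Real.logb 2 (∏ i : Fin n, p (X (i:ℕ) ω))) := by
    set A : ℕ → Set Ω := fun n => {ω | ((γ n (fun i : Fin n => X i ω)).length : ℝ)
      + 2 * Real.logb 2 n ≤ -Real.logb 2 (∏ i : Fin n, p (X (i:ℕ) ω))} with hAdef
    have hsummable : Summable (fun n : ℕ => (((n:ℝ)+1) ^ 2)⁻¹) := by
      have h1 : Summable (fun n : ℕ => 1/(n:ℝ)^2) :=
        Real.summable_one_div_nat_pow.mpr one_lt_two
      have h2 := (summable_nat_add_iff 1).mpr h1
      simpa [one_div] using h2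
    have hsum : ∑' n : ℕ, μ (A (n+1)) ≠ ⊤ := by
      have hcalc : ∑' n : ℕ, μ (A (n+1)) ≤ ENNReal.ofReal (∑' n : ℕ, (((n:ℝ)+1) ^ 2)⁻¹) := by
        rw [ENNReal.ofReal_tsum_of_nonneg (fun n => by positivity) hsummable]
        refine ENNReal.tsum_le_tsum (fun n => ?_)
        have h := hA (n+1) (Nat.le_add_left 1 n)
        simpa only [hAdef, Nat.cast_add, Nat.cast_one] using h
      exact (hcalc.trans_lt ENNReal.ofReal_lt_top).ne
    have h0 : μ {ω | ∃ᶠ n in atTop, ω ∈ A (n+1)} = 0 :=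
      measure_setOf_frequently_eq_zero hsum
    have hae : ∀ᵐ ω ∂μ, ω ∉ {ω | ∃ᶠ n in atTop, ω ∈ A (n+1)} :=
      measure_eq_zero_iff_ae_notMem.mp h0
    filter_upwards [hae] with ω hω
    rw [not_frequently, eventually_atTop] at hω
    rw [eventually_atTop]
    obtain ⟨N, hN⟩ := hω
    refine ⟨N+1, fun m hm => ?_⟩
    have hmem := hN (m-1) (by omega)
    have hm1 : m - 1 + 1 = m := by omega
    rw [hm1] at hmem
    exact hmem
  -- combine
  filter_upwards [hslln, hpos, hBC] with ω h1 h2 h3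
  set g : ℕ → ℝ := fun n => (n:ℝ)⁻¹ • (∑ i ∈ Finset.range n, Y i ω)
    - 2 * Real.logb 2 n / n with hg
  have hlog0 : Tendsto (fun n : ℕ => 2 * Real.logb 2 (n:ℝ) / n) atTop (nhds 0) := by
    have hlog : Tendsto (fun x : ℝ => Real.log x / x) atTop (nhds 0) :=
      Real.isLittleO_log_id_atTop.tendsto_div_nhds_zero
    have h4 := (hlog.comp (tendsto_natCast_atTop_atTop (R := ℝ))).const_mul (2 / Real.log 2)
    rw [mul_zero] at h4
    convert h4 using 2 with n
    simp only [Function.comp_apply]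
    rw [Real.logb]
    ring
  have htend : Tendsto g atTop (nhds H) := by
    have h5 := h1.sub hlog0
    rw [sub_zero] at h5
    exact h5
  have hliminfg : atTop.liminf (fun n => ENNReal.ofReal (g n)) = ENNReal.ofReal H :=
    Tendsto.liminf_eq ((ENNReal.continuous_ofReal.tendsto H).comp htend)
  have hle : ∀ᶠ n in atTop, ENNReal.ofReal (g n)
      ≤ ((γ n (fun i : Fin n => X i ω)).length : ℝ≥0∞) / (n : ℝ≥0∞) := by
    filter_upwards [h3, eventually_ge_atTop 1] with n hn h1n
    have hnposR : (0:ℝ) < n := by exact_mod_cast h1n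
    push_neg at hn
    have hsum_eq : ∑ i ∈ Finset.range n, Y i ω
        = -Real.logb 2 (∏ i : Fin n, p (X (i:ℕ) ω)) := by
      rw [← Fin.sum_univ_eq_sum_range (fun i => Y i ω) n,
        Real.logb_prod (Finset.univ) (fun i : Fin n => p (X (i:ℕ) ω))
          (fun i _ => (h2 (i:ℕ)).ne')]
      simp [hY, hf, Finset.sum_neg_distrib]
    have hsum_lt : ∑ i ∈ Finset.range n, Y i ω
        < ((γ n (fun i : Fin n => X i ω)).length : ℝ) + 2 * Real.logb 2 n := by
      rw [hsum_eq]; exact hn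
    have hgle : g n ≤ ((γ n (fun i : Fin n => X i ω)).length : ℝ) / n := by
      have hrw2 : g n = ((∑ i ∈ Finset.range n, Y i ω) - 2 * Real.logb 2 n) / n := by
        simp only [hg, smul_eq_mul]; ring
      rw [hrw2]
      exact (div_le_div_iff_of_pos_right hnposR).mpr (by linarith)
    calc ENNReal.ofReal (g n)
        ≤ ENNReal.ofReal (((γ n (fun i : Fin n => X i ω)).length : ℝ) / n) :=
          ENNReal.ofReal_le_ofReal hgle
      _ = ((γ n (fun i : Fin n => X i ω)).length : ℝ≥0∞) / (n : ℝ≥0∞) := by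
          rw [ENNReal.ofReal_div_of_pos hnposR, ENNReal.ofReal_natCast,
            ENNReal.ofReal_natCast]
  rw [← hliminfg]
  exact liminf_le_liminf hle
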